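/- Let A be a central simple algebra over a field C and b₁, b₂ ∈ A linearly independent over C. Then there exists c ∈ A with b₁ c b₂ ≠ b₂ c b₁. -/

import Mathlib

open Pointwise

private lemma sandwich_aux {A : Type*} [Ring A] {b₁ b₂ : A}
    (hc : ∀ c : A, b₁ * c * b₂ = b₂ * c * b₁) {z : A}
    (hz : z ∈ AddSubgroup.closure ((Set.univ : Set A) * ({b₂} : Set A) * (Set.univ : Set A))) :
    ∃ d : A, ∀ c : A, b₁ * c * z = b₂ * c * d := by
  induction hz using AddSubgroup.closure_induction with
  | mem w hw =>
    obtain ⟨u, ⟨x, -, y, hy, rfl⟩, v, -, rfl⟩ := hw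
    rw [Set.mem_singleton_iff] at hy
    subst y
    refine ⟨x * b₁ * v, fun c => ?_⟩
    have := hc (c * x)
    calc b₁ * c * (x * b₂ * v) = (b₁ * (c * x) * b₂) * v := by noncomm_ring
      _ = (b₂ * (c * x) * b₁) * v := by rw [this]
      _ = b₂ * c * (x * b₁ * v) := by noncomm_ring
  | zero => exact ⟨0, fun c => by simp⟩
  | add x y _ _ hx hy =>
    obtain ⟨d₁, h₁⟩ := hx
    obtain ⟨d₂, h₂⟩ := hy
    exact ⟨d₁ + d₂, fun c => by simp [mul_add, h₁ c, h₂ c]⟩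
  | neg x _ hx =>
    obtain ⟨d, h⟩ := hx
    exact ⟨-d, fun c => by simp [h c]⟩

private lemma sandwich_aux2 {A : Type*} [Ring A] {b₂ z : A}
    (hz : ∀ c : A, b₂ * c * z = 0) {w : A}
    (hw : w ∈ AddSubgroup.closure ((Set.univ : Set A) * ({z} : Set A) * (Set.univ : Set A))) :
    ∀ c : A, b₂ * c * w = 0 := by
  induction hw using AddSubgroup.closure_induction with
  | mem w hw =>
    obtain ⟨u, ⟨x, -, y, hy, rfl⟩, v, -, rfl⟩ := hw
    rw [Set.mem_singleton_iff] at hy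
    subst y
    intro c
    have := hz (c * x)
    calc b₂ * c * (x * z * v) = (b₂ * (c * x) * z) * v := by noncomm_ring
      _ = 0 := by rw [this]; simp
  | zero => intro c; simp
  | add x y _ _ hx hy => intro c; simp [mul_add, hx c, hy c]
  | neg x _ hx => intro c; simp [hx c]

/-- In a central simple algebra, if `b₁, b₂` are linearly independent over the
center `C`, then `b₁ c b₂ ≠ b₂ c b₁` for some `c`. -/
theorem exists_noncommuting_sandwich {C : Type*} [Field C] {A : Type*} [Ring A]
    [Algebra C A] [Algebra.IsCentral C A] [IsSimpleRing A] (b₁ b₂ : A)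
    (h : LinearIndependent C ![b₁, b₂]) :
    ∃ c : A, b₁ * c * b₂ ≠ b₂ * c * b₁ := by
  by_contra hcon
  push_neg at hcon
  have hb₂ : b₂ ≠ 0 := by
    have := h.ne_zero 1
    simpa using this
  -- 1 is in the two-sided ideal generated by b₂
  have h1 : (1 : A) ∈ TwoSidedIdeal.span {b₂} :=
    IsSimpleRing.one_mem_of_ne_zero_mem (TwoSidedIdeal.span {b₂}) hb₂
      (TwoSidedIdeal.subset_span rfl)
  rw [TwoSidedIdeal.mem_span_iff_mem_addSubgroup_closure] at h1
  obtain ⟨d, hd⟩ := sandwich_aux hcon h1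
  -- so b₁ * c = b₂ * c * d for all c
  have key : ∀ c : A, b₁ * c = b₂ * c * d := fun c => by simpa using hd c
  -- d is central
  have hz : ∀ c' : A, c' * d - d * c' = 0 := by
    intro c'
    by_contra hne
    have hann : ∀ c : A, b₂ * c * (c' * d - d * c') = 0 := by
      intro c
      have h1 := key (c * c')
      have h2 := congrArg (· * c') (key c)
      simp only [mul_assoc] at h1 h2 ⊢
      rw [mul_sub, mul_sub, ← h1, ← h2, sub_self]
    have h1' : (1 : A) ∈ TwoSidedIdeal.span {c' * d - d * c'} :=
      IsSimpleRing.one_mem_of_ne_zero_mem (TwoSidedIdeal.span {c' * d - d * c'}) hne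
        (TwoSidedIdeal.subset_span rfl)
    rw [TwoSidedIdeal.mem_span_iff_mem_addSubgroup_closure] at h1'
    have := sandwich_aux2 hann h1' 1
    simp at this
    exact hb₂ this
  have hdc : d ∈ Subalgebra.center C A := by
    rw [Subalgebra.mem_center_iff]
    intro c'
    exact sub_eq_zero.mp (hz c')
  have hbot : d ∈ (⊥ : Subalgebra C A) := Algebra.IsCentral.out hdc
  rw [Algebra.mem_bot] at hbot
  obtain ⟨c₀, hc₀⟩ := hbot
  -- b₁ = c₀ • b₂
  have key1 := key 1
  rw [mul_one, mul_one] at key1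
  have hb1 : b₁ = c₀ • b₂ := by
    rw [key1, ← hc₀, ← Algebra.commutes, Algebra.smul_def]
  rw [LinearIndependent.pair_iff] at h
  have := (h 1 (-c₀) (by rw [hb1]; simp)).1
  exact one_ne_zero this
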